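/- During the noise-free learning protocol with the revised Winner-Take-All rule and overlap bound o·k on shared children: (1) when a concept is shown for the first time, the neuron engaged for learning it was never previously engaged; (2) when a concept is shown again, the engaged neuron is the same one engaged at its first showing. -/
import Mathlib


open scoped Classical
noncomputable section

/-- A concept hierarchy: concepts at levels `0..L`, each concept at level `≥ 1`
has exactly `k` children one level below, level-0 concepts have no children,
there are exactly `k` top-level concepts, and every non-top concept has a parent. -/
structure ConceptHierarchy (α : Type) [DecidableEq α] where
  L : ℕ
  k : ℕ
  concepts : Finset α
  level : α → ℕ
  children : α → Finset α
  level_le : ∀ c ∈ concepts, level c ≤ L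
  children_mem : ∀ c ∈ concepts, ∀ c' ∈ children c, c' ∈ concepts
  children_level : ∀ c ∈ concepts, ∀ c' ∈ children c, level c' + 1 = level c
  children_card : ∀ c ∈ concepts, 1 ≤ level c → (children c).card = k
  children_leaf : ∀ c ∈ concepts, level c = 0 → children c = ∅
  top_card : (concepts.filter (fun c => level c = L)).card = k
  has_parent : ∀ c ∈ concepts, level c < L → ∃ c' ∈ concepts, c ∈ children c'

namespace ConceptHierarchy

variable {α : Type} [DecidableEq α]

/-- The parents of a concept. -/
def parents (H : ConceptHierarchy α) (c : α) : Finset α :=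
  H.concepts.filter (fun c' => c ∈ H.children c')

/-- Limited overlap: each concept at level `≥ 1` shares at most `o·k` children
with the union of the other concepts at the same level. -/
def LimitedOverlap (H : ConceptHierarchy α) (o : ℝ) : Prop :=
  ∀ c ∈ H.concepts, 1 ≤ H.level c →
    (((H.children c).filter (fun d => ∃ c' ∈ H.concepts, c' ≠ c ∧
        H.level c' = H.level c ∧ d ∈ H.children c')).card : ℝ) ≤ o * H.k

/-- Tree hierarchy: no overlap among child sets of distinct same-level concepts. -/
def IsTree (H : ConceptHierarchy α) : Prop :=
  ∀ c ∈ H.concepts, ∀ c' ∈ H.concepts, H.level c = H.level c' → c ≠ c' →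
    Disjoint (H.children c) (H.children c')

/-- Descendant relation: reflexive-transitive closure of the children relation. -/
inductive Desc (H : ConceptHierarchy α) : α → α → Prop
  | refl (c : α) : Desc H c c
  | step {c d e : α} : d ∈ H.children c → Desc H d e → Desc H c e

/-- The level-0 descendants of a concept. -/
def leaves (H : ConceptHierarchy α) (c : α) : Finset α :=
  H.concepts.filter (fun d => H.Desc c d ∧ H.level d = 0)

/-- Level-indexed bottom-up support sets: `S(0) = B ∩ C₀`,
`S(ℓ) = {c at level ℓ : |children(c) ∩ S(ℓ-1)| ≥ r·k}`. -/
def suppL (H : ConceptHierarchy α) (r : ℝ) (B : Finset α) : ℕ → Finset α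
  | 0 => B ∩ H.concepts.filter (fun c => H.level c = 0)
  | (ℓ+1) => H.concepts.filter (fun c => H.level c = ℓ + 1 ∧
      r * H.k ≤ ((H.children c ∩ suppL H r B ℓ).card : ℝ))

/-- `supp_r(B) = ⋃_ℓ S(ℓ)`. -/
def supp (H : ConceptHierarchy α) (r : ℝ) (B : Finset α) : Set α :=
  ⋃ ℓ, ↑(H.suppL r B ℓ)

/-- Time-and-level-indexed support sets with feedback strength `f`:
`S(0,t) = B`; `S(ℓ,0) = ∅` for `ℓ ≥ 1`; and
`S(ℓ,t) = S(ℓ,t-1) ∪ {c at level ℓ : |children(c) ∩ S(ℓ-1,t-1)| + f·|parents(c) ∩ S(ℓ+1,t-1)| ≥ r·k}`. -/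
def suppFB (H : ConceptHierarchy α) (r f : ℝ) (B : Finset α) : ℕ → ℕ → Finset α
  | 0, _ => B
  | (_+1), 0 => ∅
  | (ℓ+1), (t+1) => suppFB H r f B (ℓ+1) t ∪
      H.concepts.filter (fun c => H.level c = ℓ + 1 ∧
        r * H.k ≤ ((H.children c ∩ suppFB H r f B ℓ t).card : ℝ) +
          f * ((H.parents c ∩ suppFB H r f B (ℓ+2) t).card : ℝ))
  termination_by ℓ t => t

/-- `supp_{r,f}(B,*,t) = ⋃_ℓ S(ℓ,t)`. -/
def suppFBatTime (H : ConceptHierarchy α) (r f : ℝ) (B : Finset α) (t : ℕ) : Set α :=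
  ⋃ ℓ, ↑(H.suppFB r f B ℓ t)

/-- `supp_{r,f}(B) = ⋃_{ℓ,t} S(ℓ,t)`. -/
def suppFBSet (H : ConceptHierarchy α) (r f : ℝ) (B : Finset α) : Set α :=
  ⋃ t, H.suppFBatTime r f B t

end ConceptHierarchy

/-- Feed-forward 0/1 weights: weight 1 from the rep of a child to the rep of its
parent, weight 0 otherwise. -/
def ffWeight {α ν : Type} [DecidableEq α] (H : ConceptHierarchy α) (rep : α → ν)
    (u v : ν) : ℝ :=
  if ∃ c ∈ H.concepts, ∃ c' ∈ H.children c, u = rep c' ∧ v = rep c then 1 else 0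

/-- Feedback-network weights: weight 1 upward (rep of child to rep of parent),
weight `f` downward (rep of parent to rep of child), 0 otherwise. -/
def fbWeight {α ν : Type} [DecidableEq α] (H : ConceptHierarchy α) (rep : α → ν)
    (f : ℝ) (u v : ν) : ℝ :=
  if ∃ c ∈ H.concepts, ∃ c' ∈ H.children c, u = rep c' ∧ v = rep c then 1
  else if ∃ c ∈ H.concepts, ∃ c' ∈ H.children c, u = rep c ∧ v = rep c' then f
  else 0

/-- during noise-free learning with the revised Winner-Take-All rule
(which engages, among neurons with strictly more than `o·k` incoming neighbors
contributing potential `≥ w`, one with highest incoming potential), and with the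
weight properties guaranteed by Oja's rule: (1) a concept shown for the first time
engages a never-previously-engaged neuron; (2) a concept shown again engages the
same neuron as at its first showing. -/
theorem wta_learning_engagement {α ν : Type} [DecidableEq α] [DecidableEq ν] [Fintype ν]
    (H : ConceptHierarchy α) (o : ℝ) (hO : H.LimitedOverlap o) (ho1 : o < 1)
    (hk : 1 ≤ H.k)
    (rep : α → ν) (hrep_inj : Function.Injective rep)
    (m : ℕ) (shown : ℕ → α) (engaged : ℕ → ν) (weight : ℕ → ν → ν → ℝ)
    (w : ℝ) (hw : w = 1 / (H.k : ℝ) ^ (H.L + 1)) (hwpos : 0 < w)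
    (hshown : ∀ i < m, shown i ∈ H.concepts ∧ 1 ≤ H.level (shown i))
    -- unengaged neurons keep all incoming weights equal to the initial weight `w`
    (hunengaged : ∀ i < m, ∀ u : ν, (∀ j < i, engaged j ≠ u) →
        ∀ v : ν, weight i v u = w)
    -- Oja's rule: a neuron engaged only for concept `c` has incoming weights from
    -- reps of `children(c)` strictly above `w`, and all others strictly below `w`
    (hengagedwts : ∀ i < m, ∀ u : ν, ∀ c ∈ H.concepts,
        (∃ j < i, engaged j = u) → (∀ j < i, engaged j = u → shown j = c) →
        ∀ v : ν, (v ∈ (H.children c).image rep → w < weight i v u) ∧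
                 (v ∉ (H.children c).image rep → weight i v u < w))
    -- the engaged neuron is a candidate: strictly more than `o·k` incoming
    -- neighbors (among the firing reps of the shown concept's children)
    -- contribute potential `≥ w`
    (hWTAcand : ∀ i < m,
        o * H.k < ((((H.children (shown i)).image rep).filter
            (fun v => w ≤ weight i v (engaged i))).card : ℝ))
    -- and it has the highest incoming potential among all candidates
    (hWTAmax : ∀ i < m, ∀ u : ν,
        o * H.k < ((((H.children (shown i)).image rep).filter
            (fun v => w ≤ weight i v u)).card : ℝ) →
        ∑ v ∈ (H.children (shown i)).image rep, weight i v u ≤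
          ∑ v ∈ (H.children (shown i)).image rep, weight i v (engaged i)) :
    (∀ i < m, (∀ j < i, shown j ≠ shown i) → ∀ j < i, engaged j ≠ engaged i) ∧
    (∀ i < m, ∀ j < i, shown j = shown i → engaged j = engaged i) := by
  have key : ∀ i, i < m → ∀ j, j < i → (shown j = shown i ↔ engaged j = engaged i) := by
    intro i
    induction i using Nat.strong_induction_on with
    | _ i ih =>
      intro him j hji
      have inv : ∀ a b, a < i → b < i → (shown a = shown b ↔ engaged a = engaged b) := by
        intro a b ha hb
        rcases lt_trichotomy a b with h | h | h
        · exact ih b hb (lt_trans hb him) a h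
        · subst h; simp
        · exact ⟨fun t => ((ih a ha (lt_trans ha him) b h).mp t.symm).symm,
            fun t => ((ih a ha (lt_trans ha him) b h).mpr t.symm).symm⟩
      -- ineligibility lemma
      have inelig : ∀ u : ν, ∀ c ∈ H.concepts, c ≠ shown i →
          (∃ a, a < i ∧ engaged a = u) → (∀ a < i, engaged a = u → shown a = c) →
          ¬ (o * H.k < ((((H.children (shown i)).image rep).filter
              (fun v => w ≤ weight i v u)).card : ℝ)) := by
        intro u c hcmem hcne hprev hsole hcand
        have hsub : ((H.children (shown i)).image rep).filter (fun v => w ≤ weight i v u)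
            ⊆ ((H.children (shown i)) ∩ H.children c).image rep := by
          intro v hv
          simp only [Finset.mem_filter, Finset.mem_image] at hv
          obtain ⟨⟨d, hd, rfl⟩, hwle⟩ := hv
          have hprev' : ∃ a, a < i ∧ engaged a = u := hprev
          have hvmem : rep d ∈ (H.children c).image rep := by
            by_contra hnot
            have := (hengagedwts i him u c hcmem (by
              obtain ⟨a, ha, hea⟩ := hprev'
              exact ⟨a, ha, hea⟩) hsole (rep d)).2 hnot
            linarith
          simp only [Finset.mem_image] at hvmem ⊢
          obtain ⟨d', hd', hdd⟩ := hvmem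
          exact ⟨d, Finset.mem_inter.mpr ⟨hd, by rwa [hrep_inj hdd] at hd'⟩, rfl⟩
        have h1 : (((H.children (shown i)).image rep).filter (fun v => w ≤ weight i v u)).card
            ≤ ((H.children (shown i)) ∩ H.children c).card :=
          le_trans (Finset.card_le_card hsub) Finset.card_image_le
        have h2 : (H.children (shown i)) ∩ H.children c ⊆
            (H.children (shown i)).filter (fun d => ∃ c' ∈ H.concepts, c' ≠ shown i ∧
              H.level c' = H.level (shown i) ∧ d ∈ H.children c') := by
          intro d hd
          rw [Finset.mem_inter] at hd
          refine Finset.mem_filter.mpr ⟨hd.1, c, hcmem, hcne, ?_, hd.2⟩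
          have e1 := H.children_level c hcmem d hd.2
          have e2 := H.children_level (shown i) (hshown i him).1 d hd.1
          omega
        have h3 := hO (shown i) (hshown i him).1 (hshown i him).2
        have h4 := Finset.card_le_card h2
        have h5 : ((((H.children (shown i)).image rep).filter
            (fun v => w ≤ weight i v u)).card : ℝ) ≤ o * H.k := by
          refine le_trans ?_ h3
          exact_mod_cast le_trans h1 h4
        linarith
      -- main argument
      have hki : 1 ≤ H.level (shown i) := (hshown i him).2
      have hcardk : ((H.children (shown i)).image rep).card = H.k := by
        rw [Finset.card_image_of_injective _ hrep_inj]
        exact H.children_card (shown i) (hshown i him).1 hki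
      constructor
      · intro hshow
        by_contra hne
        by_cases hprev : ∃ a, a < i ∧ engaged a = engaged i
        · -- engaged i was previously engaged, solely for some concept ≠ shown i
          obtain ⟨a, ha, hea⟩ := hprev
          have hsole : ∀ b < i, engaged b = engaged i → shown b = shown a := by
            intro b hb heb
            exact (inv b a hb ha).mpr (by rw [heb, hea])
          have hane : shown a ≠ shown i := by
            intro hshowa
            exact hne ((inv j a hji ha).mp (hshow.trans hshowa.symm) |>.trans hea)
          exact inelig (engaged i) (shown a) (hshown a (lt_trans ha him)).1 hane
            ⟨a, ha, hea⟩ hsole (hWTAcand i him)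
        · -- engaged i is a fresh neuron: all incoming weights = w
          push_neg at hprev
          have hfresh : ∀ v : ν, weight i v (engaged i) = w :=
            hunengaged i him (engaged i) (fun a ha => hprev a ha)
          -- engaged j is a candidate with strictly higher potential
          have hsolej : ∀ b < i, engaged b = engaged j → shown b = shown i := by
            intro b hb heb
            exact ((inv b j hb hji).mpr heb).trans hshow
          have hwts := hengagedwts i him (engaged j) (shown i) (hshown i him).1
            ⟨j, hji, rfl⟩ hsolej
          have hfull : ((H.children (shown i)).image rep).filter
              (fun v => w ≤ weight i v (engaged j)) = (H.children (shown i)).image rep := by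
            apply Finset.filter_true_of_mem
            intro v hv
            exact le_of_lt ((hwts v).1 hv)
          have hcandj : o * H.k < ((((H.children (shown i)).image rep).filter
              (fun v => w ≤ weight i v (engaged j))).card : ℝ) := by
            rw [hfull, hcardk]
            have hkpos : (0 : ℝ) < H.k := by exact_mod_cast lt_of_lt_of_le Nat.zero_lt_one hk
            nlinarith
          have hle := hWTAmax i him (engaged j) hcandj
          have hne' : ((H.children (shown i)).image rep).Nonempty := by
            rw [← Finset.card_pos, hcardk]; omega
          have hlt : ∑ v ∈ (H.children (shown i)).image rep, weight i v (engaged i) <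
              ∑ v ∈ (H.children (shown i)).image rep, weight i v (engaged j) := by
            apply Finset.sum_lt_sum_of_nonempty hne'
            intro v hv
            rw [hfresh v]
            exact (hwts v).1 hv
          linarith
      · intro heng
        by_contra hshow
        have hsole : ∀ b < i, engaged b = engaged i → shown b = shown j := by
          intro b hb heb
          exact (inv b j hb hji).mpr (by rw [heb, heng])
        exact inelig (engaged i) (shown j) (hshown j (lt_trans hji him)).1 hshow
          ⟨j, hji, heng⟩ hsole (hWTAcand i him)
  constructor
  · intro i him hnew j hji heq
    exact hnew j hji ((key i him j hji).mpr heq)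
  · intro i him j hji hshow
    exact (key i him j hji).mp hshow
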